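/- Let V be an n-dimensional real inner product space and A : V × V × V → ℝ a symmetric trilinear form. Let e₁ be a unit vector at which the function F(v) = A(v,v,v) attains its maximum over the unit sphere of V, and set μ₁ = A(e₁,e₁,e₁). Then there exist an orthonormal basis {e₁, e₂, …, e_n} of V extending e₁ and real numbers μ₁, μ₂, …, μ_n such that: (i) A(e₁, e_i, e_j) = μ_i δ_{ij} for all 1 ≤ i, j ≤ n; (ii) μ₁ ≥ 2μ_i for every i ≥ 2, and whenever μ₁ = 2μ_i for some i ≥ 2, then A(e_i, e_i, e_i) = 0. -/

import Mathlib

open scoped BigOperators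

open Real Filter Topology in
private lemma poly_max_stmt4 (μ₁ b m a : ℝ)
    (hF : ∀ t : ℝ, (Real.cos t)^3*μ₁ + 3*(Real.cos t)^2*Real.sin t*b
      + 3*Real.cos t*(Real.sin t)^2*m + (Real.sin t)^3*a ≤ μ₁) :
    b = 0 ∧ 2*m ≤ μ₁ ∧ (μ₁ = 2*m → a = 0) := by
  -- Step 1: b = 0
  have hb0 : b = 0 := by
    set f : ℝ → ℝ := fun t => (Real.cos t)^3 * μ₁ + 3*(Real.cos t)^2*Real.sin t*b
        + 3*Real.cos t*(Real.sin t)^2*m + (Real.sin t)^3*a with hf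
    have hmax0 : IsLocalMax f 0 := by
      apply Filter.Eventually.of_forall
      intro t
      have h0 : f 0 = μ₁ := by simp [hf]
      rw [h0]; exact hF t
    have hder : HasDerivAt f (3*b) 0 := by
      have hc : HasDerivAt Real.cos (-Real.sin 0) 0 := Real.hasDerivAt_cos 0
      have hs : HasDerivAt Real.sin (Real.cos 0) 0 := Real.hasDerivAt_sin 0
      have H := ((((hc.pow 3).mul_const μ₁)).add
        ((((hc.pow 2).mul hs)).const_mul (3*b))).add
        (((hc.mul (hs.pow 2)).const_mul (3*m)).add ((hs.pow 3).mul_const a))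
      convert H using 1
      · rfl
      · rfl
      · ext t; simp only [hf, Pi.add_apply, Pi.mul_apply, Pi.pow_apply]; ring
      · simp
        try ring
    have := hmax0.hasDerivAt_eq_zero hder
    linarith
  -- Step 2: 2m ≤ μ₁
  have hm2 : 2 * m ≤ μ₁ := by
    set g : ℝ → ℝ := fun t => μ₁*(1+Real.cos t+(Real.cos t)^2) - 3*m*(Real.cos t*(1+Real.cos t))
      with hg
    have hge : ∀ t : ℝ, Real.cos t < 1 → 0 ≤ g t := by
      intro t hc
      have h1 := hF t
      have h2 := hF (-t)
      rw [Real.cos_neg, Real.sin_neg] at h2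
      have hs2 : (Real.sin t)^2 = 1 - (Real.cos t)^2 := by
        nlinarith [Real.sin_sq_add_cos_sq t]
      rw [hb0] at h1 h2
      have expand : (1-Real.cos t)*g t
          = (μ₁ - ((Real.cos t)^3*μ₁ + 3*Real.cos t*(Real.sin t)^2*m + (Real.sin t)^3*a))/2
          + (μ₁ - ((Real.cos t)^3*μ₁ + 3*Real.cos t*(Real.sin t)^2*m - (Real.sin t)^3*a))/2 := by
        simp only [hg]; linear_combination (3*Real.cos t*m)*hs2
      have key : 0 ≤ (1 - Real.cos t) * g t := by rw [expand]; linarith [h1, h2]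
      exact nonneg_of_mul_nonneg_right key (by linarith)
    have hcont : ContinuousAt g 0 := by fun_prop
    have htend : Tendsto g (𝓝[≠] (0:ℝ)) (𝓝 (g 0)) :=
      (hcont.tendsto).mono_left nhdsWithin_le_nhds
    have hev : ∀ᶠ t in 𝓝[≠] (0:ℝ), 0 ≤ g t := by
      have hmem : Set.Ioo (-1:ℝ) 1 ∈ 𝓝[≠] (0:ℝ) :=
        nhdsWithin_le_nhds (Ioo_mem_nhds (by norm_num) (by norm_num))
      filter_upwards [hmem, self_mem_nhdsWithin] with t ht ht0
      apply hge
      rcases lt_or_ge (Real.cos t) 1 with h | h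
      · exact h
      · exfalso
        have hc1 : Real.cos t = 1 := le_antisymm (Real.cos_le_one t) h
        have := (Real.cos_eq_one_iff_of_lt_of_lt (x := t)
          (by nlinarith [Real.pi_gt_three, ht.1, ht.2])
          (by nlinarith [Real.pi_gt_three, ht.1, ht.2])).mp hc1
        exact ht0 this
    have h0 : 0 ≤ g 0 := ge_of_tendsto htend hev
    simp [hg] at h0
    linarith
  refine ⟨hb0, hm2, ?_⟩
  -- Step 3
  intro heq
  set h : ℝ → ℝ := fun t => m * Real.sin t * (2+Real.cos t)/(1+Real.cos t)^2 with hh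
  have hkey : ∀ t : ℝ, 0 < Real.cos t →
      (Real.sin t)^3 * a ≤ h t * (Real.sin t)^3 := by
    intro t hc
    have h1 := hF t
    rw [hb0, heq] at h1
    have hs2 : (Real.sin t)^2 = 1 - (Real.cos t)^2 := by
      nlinarith [Real.sin_sq_add_cos_sq t]
    have hne : (1 + Real.cos t) ≠ 0 := by positivity
    have hht : h t * (Real.sin t)^3 = m * (1-Real.cos t)^2 * (2+Real.cos t) := by
      show m * Real.sin t * (2+Real.cos t)/(1+Real.cos t)^2 * (Real.sin t)^3 = _
      rw [div_mul_eq_mul_div, div_eq_iff (pow_ne_zero 2 hne)]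
      linear_combination (m*(2+Real.cos t)*((Real.sin t)^2+1-(Real.cos t)^2)) * hs2
    have e2 : 2*m - 2*m*(Real.cos t)^3 - 3*Real.cos t*(Real.sin t)^2*m
        = m*(1-Real.cos t)^2*(2+Real.cos t) := by
      linear_combination (-3*Real.cos t*m)*hs2
    rw [hht]
    linarith [h1, e2]
  have hcont : ContinuousAt h 0 := by
    apply ContinuousAt.div
    · fun_prop
    · fun_prop
    · simp
  have hle : a ≤ 0 := by
    have htend : Tendsto h (𝓝[>] (0:ℝ)) (𝓝 (h 0)) :=
      (hcont.tendsto).mono_left nhdsWithin_le_nhds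
    have hev : ∀ᶠ t in 𝓝[>] (0:ℝ), a ≤ h t := by
      have hmem : Set.Ioo (0:ℝ) 1 ∈ 𝓝[>] (0:ℝ) := Ioo_mem_nhdsGT_of_mem (by norm_num)
      filter_upwards [hmem] with t ht
      have hsp : 0 < Real.sin t := Real.sin_pos_of_pos_of_lt_pi ht.1
        (lt_trans ht.2 (by nlinarith [Real.pi_gt_three]))
      have hcp : 0 < Real.cos t := Real.cos_pos_of_mem_Ioo
        ⟨by nlinarith [Real.pi_gt_three, ht.1], by nlinarith [Real.pi_gt_three, ht.2]⟩
      have := hkey t hcp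
      have hs3 : 0 < (Real.sin t)^3 := by positivity
      nlinarith
    have h0 : a ≤ h 0 := ge_of_tendsto htend hev
    simpa [hh] using h0
  have hge' : 0 ≤ a := by
    have htend : Tendsto h (𝓝[<] (0:ℝ)) (𝓝 (h 0)) :=
      (hcont.tendsto).mono_left nhdsWithin_le_nhds
    have hev : ∀ᶠ t in 𝓝[<] (0:ℝ), h t ≤ a := by
      have hmem : Set.Ioo (-1:ℝ) 0 ∈ 𝓝[<] (0:ℝ) := Ioo_mem_nhdsLT_of_mem (by norm_num)
      filter_upwards [hmem] with t ht
      have hsn : Real.sin t < 0 := by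
        have h' : 0 < Real.sin (-t) := Real.sin_pos_of_pos_of_lt_pi (by linarith [ht.2])
          (by nlinarith [Real.pi_gt_three, ht.1])
        rw [Real.sin_neg] at h'; linarith
      have hcp : 0 < Real.cos t := Real.cos_pos_of_mem_Ioo
        ⟨by nlinarith [Real.pi_gt_three, ht.1], by nlinarith [Real.pi_gt_three, ht.2]⟩
      have := hkey t hcp
      have hs3 : (Real.sin t)^3 < 0 := by
        have := pow_pos (neg_pos.mpr hsn) 3
        nlinarith
      nlinarith
    have h0 : h 0 ≤ a := le_of_tendsto htend hev
    simpa [hh] using h0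
  linarith

open Real Filter Topology in
private lemma key_analysis_stmt4 {V : Type*} [NormedAddCommGroup V] [InnerProductSpace ℝ V]
    (A : V →ₗ[ℝ] V →ₗ[ℝ] V →ₗ[ℝ] ℝ)
    (hsym₁ : ∀ u v w, A u v w = A v u w)
    (hsym₂ : ∀ u v w, A u v w = A u w v)
    (e₁ : V) (he₁ : ‖e₁‖ = 1)
    (hmax : ∀ v : V, ‖v‖ = 1 → A v v v ≤ A e₁ e₁ e₁)
    (v : V) (hv : ‖v‖ = 1) (hov : inner ℝ e₁ v = (0:ℝ)) :
    A e₁ e₁ v = 0 ∧ 2 * A e₁ v v ≤ A e₁ e₁ e₁ ∧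
      (A e₁ e₁ e₁ = 2 * A e₁ v v → A v v v = 0) := by
  have hvo : inner ℝ v e₁ = (0:ℝ) := by rw [real_inner_comm]; exact hov
  have hee : inner ℝ e₁ e₁ = (1:ℝ) := by
    rw [real_inner_self_eq_norm_sq, he₁]; norm_num
  have hvv : inner ℝ v v = (1:ℝ) := by
    rw [real_inner_self_eq_norm_sq, hv]; norm_num
  have s1 : A v e₁ e₁ = A e₁ e₁ v := by rw [hsym₁ v e₁ e₁, hsym₂ e₁ v e₁]
  have s2 : A e₁ v e₁ = A e₁ e₁ v := hsym₂ e₁ v e₁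
  have s3 : A v e₁ v = A e₁ v v := hsym₁ v e₁ v
  have s4 : A v v e₁ = A e₁ v v := by rw [hsym₂ v v e₁, hsym₁ v e₁ v]
  have hnorm : ∀ t : ℝ, ‖Real.cos t • e₁ + Real.sin t • v‖ = 1 := by
    intro t
    have h2 : ‖Real.cos t • e₁ + Real.sin t • v‖ ^ 2 = 1 := by
      rw [← real_inner_self_eq_norm_sq]
      simp only [inner_add_left, inner_add_right, real_inner_smul_left, real_inner_smul_right,
        hee, hvv, hov, hvo]
      nlinarith [Real.sin_sq_add_cos_sq t]
    nlinarith [norm_nonneg (Real.cos t • e₁ + Real.sin t • v)]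
  have hF : ∀ t : ℝ, (Real.cos t)^3*(A e₁ e₁ e₁) + 3*(Real.cos t)^2*Real.sin t*(A e₁ e₁ v)
      + 3*Real.cos t*(Real.sin t)^2*(A e₁ v v) + (Real.sin t)^3*(A v v v) ≤ A e₁ e₁ e₁ := by
    intro t
    have hexp : A (Real.cos t • e₁ + Real.sin t • v) (Real.cos t • e₁ + Real.sin t • v)
        (Real.cos t • e₁ + Real.sin t • v)
        = (Real.cos t)^3*(A e₁ e₁ e₁) + 3*(Real.cos t)^2*Real.sin t*(A e₁ e₁ v)
          + 3*Real.cos t*(Real.sin t)^2*(A e₁ v v) + (Real.sin t)^3*(A v v v) := by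
      simp only [map_add, map_smul, LinearMap.add_apply, LinearMap.smul_apply, smul_eq_mul]
      rw [s1, s2, s3, s4]
      ring
    rw [← hexp]
    exact hmax _ (hnorm t)
  exact poly_max_stmt4 _ _ _ _ hF

/-- the typical (Ejiri) orthonormal basis adapted to a symmetric trilinear
form on an inner ℝ product space, built from a maximizer of `F(v) = A(v,v,v)` on the unit
sphere. -/
theorem stmt4 {V : Type*} [NormedAddCommGroup V] [InnerProductSpace ℝ V]
    [FiniteDimensional ℝ V] {n : ℕ} (hn : 0 < n)
    (hdim : Module.finrank ℝ V = n)
    (A : V →ₗ[ℝ] V →ₗ[ℝ] V →ₗ[ℝ] ℝ)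
    (hsym₁ : ∀ u v w, A u v w = A v u w)
    (hsym₂ : ∀ u v w, A u v w = A u w v)
    (e₁ : V) (he₁ : ‖e₁‖ = 1)
    (hmax : ∀ v : V, ‖v‖ = 1 → A v v v ≤ A e₁ e₁ e₁) :
    ∃ b : OrthonormalBasis (Fin n) ℝ V, ∃ μ : Fin n → ℝ,
      b ⟨0, hn⟩ = e₁ ∧ μ ⟨0, hn⟩ = A e₁ e₁ e₁ ∧
      (∀ i j : Fin n, A e₁ (b i) (b j) = if i = j then μ i else 0) ∧
      (∀ i : Fin n, i ≠ ⟨0, hn⟩ →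
        2 * μ i ≤ μ ⟨0, hn⟩ ∧ (μ ⟨0, hn⟩ = 2 * μ i → A (b i) (b i) (b i) = 0)) := by
  obtain ⟨m, rfl⟩ : ∃ m, n = m + 1 := ⟨n - 1, (Nat.succ_pred_eq_of_pos hn).symm⟩
  have he₁0 : e₁ ≠ 0 := by intro h; rw [h, norm_zero] at he₁; norm_num at he₁
  -- first-order condition for all orthogonal vectors
  have horth : ∀ w : V, inner ℝ e₁ w = (0:ℝ) → A e₁ e₁ w = 0 := by
    intro w hw
    rcases eq_or_ne w 0 with rfl | hw0
    · simp
    · have hnw : ‖w‖ ≠ 0 := norm_ne_zero_iff.mpr hw0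
      have hu : ‖(‖w‖⁻¹ • w)‖ = 1 := by
        rw [norm_smul, norm_inv, norm_norm, inv_mul_cancel₀ hnw]
      have hou : inner ℝ e₁ (‖w‖⁻¹ • w) = (0:ℝ) := by
        rw [real_inner_smul_right, hw, mul_zero]
      have h := (key_analysis_stmt4 A hsym₁ hsym₂ e₁ he₁ hmax _ hu hou).1
      rw [map_smul, smul_eq_mul] at h
      rcases mul_eq_zero.mp h with h' | h'
      · exact absurd h' (inv_ne_zero hnw)
      · exact h'
  set K := (ℝ ∙ e₁)ᗮ with hK
  have hEK : ∀ x : K, inner ℝ e₁ (x : V) = (0:ℝ) := fun x =>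
    Submodule.mem_orthogonal_singleton_iff_inner_right.mp x.2
  haveI : Fact (Module.finrank ℝ V = m + 1) := ⟨hdim⟩
  have hKrank : Module.finrank ℝ K = m := Submodule.finrank_orthogonal_span_singleton he₁0
  -- the symmetric operator on K: diagonalize to get eigenbasis of K
  obtain ⟨Kb, ev, hKb_on, hAij⟩ : ∃ (Kb : Fin m → K) (ev : Fin m → ℝ), Orthonormal ℝ Kb ∧
      ∀ i j : Fin m, A e₁ (Kb i : V) (Kb j : V) = if i = j then ev i else 0 := by
    set B' : K →ₗ[ℝ] K →ₗ[ℝ] ℝ := ((A e₁).domRestrict K).compl₂ K.subtype with hB'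
    set S : K →ₗ[ℝ] K :=
      { toFun := fun x => (InnerProductSpace.toDual ℝ K).symm
          (LinearMap.toContinuousLinearMap (B' x))
        map_add' := by
          intro x y
          simp [map_add]
        map_smul' := by
          intro r x
          simp } with hS
    have hSapp : ∀ x y : K, (inner ℝ (S x) y : ℝ) = A e₁ (x : V) (y : V) := by
      intro x y
      simp [hS, InnerProductSpace.toDual_symm_apply, hB']
    have hSsym : S.IsSymmetric := by
      intro x y
      rw [hSapp, real_inner_comm, hSapp, hsym₂]
    refine ⟨hSsym.eigenvectorBasis hKrank, hSsym.eigenvalues hKrank,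
      (hSsym.eigenvectorBasis hKrank).orthonormal, ?_⟩
    intro i j
    rw [← hSapp, hSsym.apply_eigenvectorBasis hKrank i, real_inner_smul_left,
      orthonormal_iff_ite.mp (hSsym.eigenvectorBasis hKrank).orthonormal i j]
    by_cases h : i = j <;> simp [h]
  have hKon : ∀ i j : Fin m, (inner ℝ (Kb i) (Kb j) : ℝ) = if i = j then 1 else 0 :=
    fun i j => orthonormal_iff_ite.mp hKb_on i j
  -- the full family
  set f : Fin (m+1) → V := Fin.cons e₁ (fun i => (Kb i : V)) with hf
  have hee : (inner ℝ e₁ e₁ : ℝ) = 1 := by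
    rw [real_inner_self_eq_norm_sq, he₁]; norm_num
  have h_on : Orthonormal ℝ f := by
    rw [orthonormal_iff_ite]
    intro i j
    refine Fin.cases ?_ ?_ i
    · refine Fin.cases ?_ ?_ j
      · simp [hf, hee, he₁]
      · intro j'
        simp [hf, hEK (Kb j'), (Fin.succ_ne_zero j').symm]
    · intro i'
      refine Fin.cases ?_ ?_ j
      · have : (inner ℝ ((Kb i' : V)) e₁ : ℝ) = 0 := by
          rw [real_inner_comm]; exact hEK (Kb i')
        simp [hf, this, Fin.succ_ne_zero i']
      · intro j'
        have : (inner ℝ ((Kb i' : V)) ((Kb j' : V)) : ℝ) = inner ℝ (Kb i') (Kb j') := rfl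
        simp only [hf, Fin.cons_succ, this, hKon, Fin.succ_inj]
  have hspan : Submodule.span ℝ (Set.range f) = ⊤ :=
    h_on.linearIndependent.span_eq_top_of_card_eq_finrank (by simp [hdim])
  set b : OrthonormalBasis (Fin (m+1)) ℝ V := OrthonormalBasis.mk h_on hspan.ge with hb
  have hbi : ∀ i, b i = f i := by
    intro i; rw [hb, OrthonormalBasis.coe_mk]
  set μ : Fin (m+1) → ℝ := Fin.cons (A e₁ e₁ e₁) ev with hμ
  have hz : (⟨0, hn⟩ : Fin (m+1)) = 0 := rfl
  refine ⟨b, μ, ?_, ?_, ?_, ?_⟩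
  · rw [hz, hbi]; simp [hf]
  · rw [hz, hμ]; simp
  · intro i j
    refine Fin.cases ?_ ?_ i
    · refine Fin.cases ?_ ?_ j
      · simp [hbi, hf, hμ]
      · intro j'
        rw [hbi, hbi]
        simp only [hf, Fin.cons_zero, Fin.cons_succ]
        rw [horth _ (hEK (Kb j'))]
        simp [(Fin.succ_ne_zero j').symm]
    · intro i'
      refine Fin.cases ?_ ?_ j
      · rw [hbi, hbi]
        simp only [hf, Fin.cons_zero, Fin.cons_succ]
        rw [hsym₂, horth _ (hEK (Kb i'))]
        simp [Fin.succ_ne_zero i']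
      · intro j'
        rw [hbi, hbi]
        simp only [hf, Fin.cons_succ, hμ]
        rw [hAij]
        simp only [Fin.succ_inj]
  · intro i hi
    rw [hz] at hi
    obtain ⟨j, rfl⟩ : ∃ j : Fin m, i = j.succ := ⟨i.pred hi, (Fin.succ_pred i hi).symm⟩
    have hnormj : ‖(Kb j : V)‖ = 1 := hKb_on.1 j
    obtain ⟨h1, h2, h3⟩ := key_analysis_stmt4 A hsym₁ hsym₂ e₁ he₁ hmax (Kb j : V) hnormj (hEK _)
    have hmj : A e₁ (Kb j : V) (Kb j : V) = ev j := by simpa using hAij j j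
    rw [hmj] at h2 h3
    constructor
    · rw [hz]
      simp only [hμ, Fin.cons_succ, Fin.cons_zero]
      exact h2
    · intro heq
      rw [hz] at heq
      simp only [hμ, Fin.cons_succ, Fin.cons_zero] at heq
      rw [hbi]
      simp only [hf, Fin.cons_succ]
      exact h3 heq
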